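/- Let n ≥ 1 and let F be a set of finite tournaments such that no transitive tournament on at most n vertices belongs to F (up to isomorphism) and every tournament on more than n vertices contains a subtournament isomorphic to a member of F. Then a finite undirected graph G has an F-free orientation if and only if G contains no clique on n+1 vertices. -/

import Mathlib

def IsOrientation {V : Type*} (G : SimpleGraph V) (D : V → V → Prop) : Prop :=
  (∀ u v, G.Adj u v ↔ (D u v ∨ D v u)) ∧ ∀ u v, ¬(D u v ∧ D v u)

def IsTournament {V : Type*} (T : V → V → Prop) : Prop :=
  (∀ a, ¬ T a a) ∧ ∀ a b, a ≠ b → (T a b ↔ ¬ T b a)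

/-- `D` is `F`-free: no induced subtournament of `D` is isomorphic to a member of `F`. -/
def FFree {V : Type*} (F : Set (Σ n : ℕ, Fin n → Fin n → Prop)) (D : V → V → Prop) : Prop :=
  ¬ ∃ p ∈ F, ∃ f : Fin p.1 → V, Function.Injective f ∧ ∀ i j, p.2 i j ↔ D (f i) (f j)

theorem ffree_orientation_iff_no_clique {V : Type*} [Fintype V] (n : ℕ) (hn : 1 ≤ n)
    (F : Set (Σ m : ℕ, Fin m → Fin m → Prop))
    (hF : ∀ p ∈ F, IsTournament p.2)
    (hsmall : ∀ p ∈ F, p.1 ≤ n → ¬ Transitive p.2)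
    (hbig : ∀ m : ℕ, n < m → ∀ T : Fin m → Fin m → Prop, IsTournament T →
      ∃ p ∈ F, ∃ f : Fin p.1 → Fin m, Function.Injective f ∧ ∀ i j, p.2 i j ↔ T (f i) (f j))
    (G : SimpleGraph V) :
    (∃ D : V → V → Prop, IsOrientation G D ∧ FFree F D) ↔
      ¬ ∃ S : Finset V, S.card = n + 1 ∧ ∀ u ∈ S, ∀ v ∈ S, u ≠ v → G.Adj u v := by
  constructor
  · rintro ⟨D, ⟨hadj, hasym⟩, hfree⟩ ⟨S, hcard, hclique⟩
    have hnoself : ∀ x, ¬ D x x := fun x hx => G.loopless.irrefl x ((hadj x x).2 (Or.inl hx))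
    let g : Fin (n + 1) ≃ S := (S.equivFinOfCardEq hcard).symm
    set T : Fin (n + 1) → Fin (n + 1) → Prop := fun i j => D (g i) (g j) with hT
    have hTt : IsTournament T := by
      constructor
      · intro a; exact hnoself _
      · intro a b hab
        have hne : ((g a : V)) ≠ (g b : V) := fun h => hab (g.injective (Subtype.ext h))
        have hor := (hadj _ _).1 (hclique _ (g a).2 _ (g b).2 hne)
        constructor
        · intro h1 h2; exact hasym _ _ ⟨h1, h2⟩
        · intro h1; rcases hor with h | h
          · exact h
          · exact absurd h h1
    obtain ⟨p, hp, f, hf, hiff⟩ := hbig (n + 1) (Nat.lt_succ_self n) T hTt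
    exact hfree ⟨p, hp, fun i => (g (f i) : V),
      fun i j h => hf (g.injective (Subtype.ext h)), fun i j => hiff i j⟩
  · intro hnocl
    let e := Fintype.equivFin V
    refine ⟨fun u v => G.Adj u v ∧ e u < e v, ⟨?_, ?_⟩, ?_⟩
    · intro u v
      constructor
      · intro h
        have hne : e u ≠ e v := fun heq => G.ne_of_adj h (e.injective heq)
        rcases lt_or_gt_of_ne hne with hl | hl
        · exact Or.inl ⟨h, hl⟩
        · exact Or.inr ⟨h.symm, hl⟩
      · rintro (⟨h, _⟩ | ⟨h, _⟩)
        · exact h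
        · exact h.symm
    · rintro u v ⟨⟨_, h1⟩, ⟨_, h2⟩⟩
      exact lt_asymm h1 h2
    · rintro ⟨p, hp, f, hf, hiff⟩
      have htourn := hF p hp
      have hAdj : ∀ i j, i ≠ j → G.Adj (f i) (f j) := by
        intro i j hij
        by_cases h : p.2 i j
        · exact ((hiff i j).1 h).1
        · have : p.2 j i := not_not.1 (fun hn => h ((htourn.2 i j hij).2 hn))
          exact (((hiff j i).1 this).1).symm
      classical
      have hle : p.1 ≤ n := by
        by_contra h
        push_neg at h
        have hcard : n + 1 ≤ (Finset.univ.image f).card := by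
          rw [Finset.card_image_of_injective _ hf, Finset.card_univ, Fintype.card_fin]
          omega
        obtain ⟨S, hS, hScard⟩ := Finset.exists_subset_card_eq hcard
        apply hnocl
        refine ⟨S, hScard, ?_⟩
        intro u hu v hv huv
        obtain ⟨i, _, hi⟩ := Finset.mem_image.1 (hS hu)
        obtain ⟨j, _, hj⟩ := Finset.mem_image.1 (hS hv)
        subst hi; subst hj
        exact hAdj i j (fun hij => huv (by rw [hij]))
      apply hsmall p hp hle
      intro a b c hab hbc
      have h1 := (hiff a b).1 hab
      have h2 := (hiff b c).1 hbc
      have hlt : e (f a) < e (f c) := h1.2.trans h2.2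
      have hac : a ≠ c := fun h => by rw [h] at hlt; exact lt_irrefl _ hlt
      by_contra h
      have hca : p.2 c a := not_not.1 (fun hn => h ((htourn.2 a c hac).2 hn))
      exact lt_asymm hlt ((hiff c a).1 hca).2
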